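/- arXiv:math/9906013 — 6 statements merged into one kernel-verified Lean document; each statement's English description precedes it below -/
import Mathlib

section
/- Let φ₁, …, φₙ : I → ℝ be linearly independent functions on an interval I. Then there exist points x₁, …, xₙ ∈ I such that for every k ∈ {1, …, n}, the k × k matrix with entries φ_j(x_i) (1 ≤ i, j ≤ k) is invertible. -/
lemma aux_step (n : ℕ) (I : Set ℝ) (φ : Fin n → ℝ → ℝ)
    (hφ : LinearIndependent ℝ (fun j : Fin n => I.restrict (φ j)))
    (k : ℕ) (hk : k + 1 ≤ n) (x : Fin k → ℝ)
    (hdet : (Matrix.of fun i j : Fin k =>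
        φ (Fin.castLE (Nat.le_of_succ_le hk) j) (x i)).det ≠ 0) :
    ∃ t ∈ I, (Matrix.of fun i j : Fin (k+1) =>
        φ (Fin.castLE hk j) ((Fin.snoc x t : Fin (k+1) → ℝ) i)).det ≠ 0 := by
  by_contra hcon
  push_neg at hcon
  set c : Fin (k+1) → ℝ := fun j => (-1 : ℝ) ^ (k + (j : ℕ)) *
    (Matrix.of fun (i j' : Fin k) =>
      φ (Fin.castLE hk (j.succAbove j')) (x i)).det with hc
  have hexp : ∀ t : ℝ, (Matrix.of fun i j : Fin (k+1) =>
      φ (Fin.castLE hk j) ((Fin.snoc x t : Fin (k+1) → ℝ) i)).det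
      = ∑ j : Fin (k+1), c j * φ (Fin.castLE hk j) t := by
    intro t
    rw [Matrix.det_succ_row _ (Fin.last k)]
    apply Finset.sum_congr rfl
    intro j _
    simp only [Matrix.of_apply, Fin.snoc_last, Fin.val_last, hc]
    have : ((Matrix.of fun i j : Fin (k+1) =>
        φ (Fin.castLE hk j) ((Fin.snoc x t : Fin (k+1) → ℝ) i)).submatrix
          (Fin.last k).succAbove j.succAbove)
        = Matrix.of fun (i j' : Fin k) => φ (Fin.castLE hk (j.succAbove j')) (x i) := by
      ext i j'
      simp [Fin.succAbove_last, Fin.snoc_castSucc]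
    rw [this]
    ring
  have hli : LinearIndependent ℝ
      (fun j : Fin (k+1) => I.restrict (φ (Fin.castLE hk j))) :=
    hφ.comp (Fin.castLE hk) (Fin.castLE_injective hk)
  have hzero : ∀ j, c j = 0 := by
    have key := Fintype.linearIndependent_iff.mp hli c ?_
    · exact key
    · funext p
      have h2 := hcon p.1 p.2
      rw [hexp p.1] at h2
      simp; exact h2
  have hlast := hzero (Fin.last k)
  rw [hc] at hlast
  simp only [Fin.val_last] at hlast
  have heven : (-1 : ℝ) ^ (k + k) = 1 := Even.neg_one_pow ⟨k, rfl⟩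
  rw [heven, one_mul] at hlast
  apply hdet
  rw [← hlast]
  congr 1
  ext i j'
  simp only [Matrix.of_apply, Fin.succAbove_last]
  congr 1

/-- For linearly independent functions `φ₁,…,φₙ` on `I` there exist points
`x₁,…,xₙ ∈ I` such that all leading principal evaluation matrices
`(φ_j (x_i))_{i,j ≤ k}` are invertible. -/
theorem exists_eval_points_all_leading_minors_invertible
    (n : ℕ) (I : Set ℝ) (φ : Fin n → ℝ → ℝ)
    (hφ : LinearIndependent ℝ (fun j : Fin n => I.restrict (φ j))) :
    ∃ x : Fin n → ℝ, (∀ i, x i ∈ I) ∧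
      ∀ k : ℕ, 1 ≤ k → ∀ hk : k ≤ n,
        IsUnit (Matrix.of fun i j : Fin k =>
          φ (Fin.castLE hk j) (x (Fin.castLE hk i))).det := by
  rcases Nat.eq_zero_or_pos n with hn | hn
  · subst hn
    exact ⟨Fin.elim0, fun i => i.elim0, fun k h1 hk => absurd (h1.trans hk) (by omega)⟩
  obtain ⟨p⟩ : Nonempty I := by
    by_contra h
    rw [not_nonempty_iff] at h
    exact hφ.ne_zero ⟨0, hn⟩ (funext fun q => h.elim q)
  suffices H : ∀ k (hkn : k ≤ n), ∃ x : Fin n → ℝ, (∀ i, x i ∈ I) ∧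
      ∀ m : ℕ, 1 ≤ m → ∀ hm : m ≤ k,
        (Matrix.of fun i j : Fin m =>
          φ (Fin.castLE (hm.trans hkn) j)
            (x (Fin.castLE (hm.trans hkn) i))).det ≠ 0 by
    obtain ⟨x, hxI, hx⟩ := H n le_rfl
    exact ⟨x, hxI, fun k h1 hk => isUnit_iff_ne_zero.mpr (hx k h1 hk)⟩
  intro k
  induction k with
  | zero =>
    intro _
    exact ⟨fun _ => p.1, fun _ => p.2, fun m h1 hm => absurd (h1.trans hm) (by omega)⟩
  | succ k ih =>
    intro hk1
    obtain ⟨x, hxI, hx⟩ := ih (Nat.le_of_succ_le hk1)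
    have hdet : (Matrix.of fun i j : Fin k =>
        φ (Fin.castLE (Nat.le_of_succ_le hk1) j)
          ((fun i : Fin k => x (Fin.castLE (Nat.le_of_succ_le hk1) i)) i)).det ≠ 0 := by
      rcases Nat.eq_zero_or_pos k with h0 | h0
      · subst h0; simp [Matrix.det_fin_zero]
      · exact hx k h0 le_rfl
    obtain ⟨t, htI, ht⟩ := aux_step n I φ hφ k hk1 _ hdet
    refine ⟨Function.update x (Fin.castLE hk1 (Fin.last k)) t, ?_, ?_⟩
    · intro i
      rcases eq_or_ne i (Fin.castLE hk1 (Fin.last k)) with rfl | hne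
      · rwa [Function.update_self]
      · rw [Function.update_of_ne hne]; exact hxI i
    · intro m h1 hm
      rcases Nat.lt_or_ge m (k+1) with hmk | hmk
      · have hmk' : m ≤ k := by omega
        have hne := hx m h1 hmk'
        convert hne using 2
        ext i j
        simp only [Matrix.of_apply]
        rw [Function.update_of_ne (by
          have := i.isLt
          simp only [ne_eq, Fin.ext_iff, Fin.coe_castLE, Fin.val_last]
          omega)]
      · have hm' : m = k + 1 := by omega
        subst hm'
        convert ht using 2
        ext i j
        simp only [Matrix.of_apply]
        congr 1
        induction i using Fin.lastCases with
        | last => rw [Fin.snoc_last, Function.update_self]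
        | cast i' =>
          rw [Fin.snoc_castSucc, Function.update_of_ne (by
            have := i'.isLt
            simp only [ne_eq, Fin.ext_iff, Fin.coe_castLE, Fin.val_last, Fin.coe_castSucc]
            omega)]
          congr 1
end

section
/- Let H : ℝⁿ → ℝ be continuously differentiable and a, b : ℝ^{n-1} → ℝ continuous, such that ∂_{n-1} H(x) = (a(x₁,…,x_{n-1}) · xₙ + b(x₁,…,x_{n-1})) · ∂ₙ H(x) for all x ∈ ℝⁿ. Define G(x₁,…,x_{n-2}, xₙ) := H(x₁,…,x_{n-2}, 0, xₙ). Then for all x ∈ ℝⁿ, H(x₁,…,xₙ) = G(x₁,…,x_{n-2}, exp(∫₀^{x_{n-1}} a(x₁,…,x_{n-2},t) dt) · xₙ + ∫₀^{x_{n-1}} b(x₁,…,x_{n-2},t) · exp(∫₀^t a(x₁,…,x_{n-2},s) ds) dt). -/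
open Real intervalIntegral

/-- Normal form of a C¹ function satisfying the linear first-order PDE
`∂_{n-1} H = (a x' · xₙ + b x') ∂ₙ H` (here `n = m + 2`): `H` is determined
by its values on the hyperplane `x_{n-1} = 0` via the linear ODE flow. -/
theorem pde_normal_form (m : ℕ)
    (H : (Fin (m + 2) → ℝ) → ℝ) (a b : (Fin (m + 1) → ℝ) → ℝ)
    (hH : ContDiff ℝ 1 H) (ha : Continuous a) (hb : Continuous b)
    (hpde : ∀ x : Fin (m + 2) → ℝ,
      fderiv ℝ H x (Pi.single (⟨m, by omega⟩ : Fin (m + 2)) 1)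
        = (a (fun i : Fin (m + 1) => x ⟨i, by omega⟩) * x ⟨m + 1, by omega⟩
           + b (fun i : Fin (m + 1) => x ⟨i, by omega⟩))
          * fderiv ℝ H x (Pi.single (⟨m + 1, by omega⟩ : Fin (m + 2)) 1)) :
    ∀ x : Fin (m + 2) → ℝ,
      H x = H (Function.update
        (Function.update x (⟨m, by omega⟩ : Fin (m + 2)) 0)
        (⟨m + 1, by omega⟩ : Fin (m + 2))
        (Real.exp (∫ t in (0:ℝ)..(x ⟨m, by omega⟩),
            a (Fin.snoc (fun i : Fin m => x ⟨i, by omega⟩) t))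
          * x ⟨m + 1, by omega⟩
          + ∫ t in (0:ℝ)..(x ⟨m, by omega⟩),
              b (Fin.snoc (fun i : Fin m => x ⟨i, by omega⟩) t)
                * Real.exp (∫ s in (0:ℝ)..t,
                    a (Fin.snoc (fun i : Fin m => x ⟨i, by omega⟩) s)))) := by
  intro x
  have hm : m < m + 2 := by omega
  have hm1 : m + 1 < m + 2 := by omega
  set idm : Fin (m + 2) := ⟨m, hm⟩ with hidm
  set idm1 : Fin (m + 2) := ⟨m + 1, hm1⟩ with hidm1
  have hne : idm ≠ idm1 := by simp [hidm, hidm1, Fin.ext_iff]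
  set x' : Fin m → ℝ := fun i => x ⟨i, by omega⟩ with hx'
  set α : ℝ → ℝ := fun t => a (Fin.snoc x' t) with hα
  set β : ℝ → ℝ := fun t => b (Fin.snoc x' t) with hβ
  have hsnocc : Continuous (fun t : ℝ => (Fin.snoc x' t : Fin (m + 1) → ℝ)) := by
    refine continuous_pi fun i => ?_
    by_cases h : (i : ℕ) < m
    · simpa [Fin.snoc, h] using continuous_const
    · simpa [Fin.snoc, h] using continuous_id'
  have hαc : Continuous α := ha.comp hsnocc
  have hβc : Continuous β := hb.comp hsnocc
  set A : ℝ → ℝ := fun t => ∫ s in (0:ℝ)..t, α s with hA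
  have hA' : ∀ t, HasDerivAt A (α t) t := fun t =>
    intervalIntegral.integral_hasDerivAt_right (hαc.intervalIntegrable _ _)
      (hαc.stronglyMeasurableAtFilter _ _) hαc.continuousAt
  have hAd : Differentiable ℝ A := fun t => (hA' t).differentiableAt
  have hAc : Continuous A := hAd.continuous
  have hβEc : Continuous (fun s => β s * Real.exp (A s)) :=
    hβc.mul (Real.continuous_exp.comp hAc)
  set B : ℝ → ℝ := fun t => ∫ s in (0:ℝ)..t, β s * Real.exp (A s) with hB
  have hB' : ∀ t, HasDerivAt B (β t * Real.exp (A t)) t := fun t =>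
    intervalIntegral.integral_hasDerivAt_right (hβEc.intervalIntegrable _ _)
      (hβEc.stronglyMeasurableAtFilter _ _) hβEc.continuousAt
  set T : ℝ := x idm with hT
  set C : ℝ := Real.exp (A T) * x idm1 + B T with hC
  set ξ : ℝ → ℝ := fun t => Real.exp (-A t) * (C - B t) with hξ
  have hexp : ∀ t, Real.exp (-A t) * Real.exp (A t) = 1 := by
    intro t; rw [← Real.exp_add]; simp
  have hξ' : ∀ t, HasDerivAt ξ (-α t * ξ t - β t) t := by
    intro t
    have h1 : HasDerivAt (fun t => Real.exp (-A t)) (Real.exp (-A t) * (-α t)) t :=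
      ((hA' t).neg).exp
    have h2 : HasDerivAt (fun t => C - B t) (-(β t * Real.exp (A t))) t :=
      (hB' t).const_sub C
    have h3 := h1.mul h2
    refine h3.congr_deriv ?_
    simp only [hξ]
    linear_combination (-(β t)) * hexp t
  -- the characteristic curve through x
  set φ : ℝ → (Fin (m + 2) → ℝ) :=
    fun t => Function.update (Function.update x idm t) idm1 (ξ t) with hφ
  have hφidm : ∀ t, φ t idm = t := by
    intro t
    simp [hφ, Function.update_of_ne hne, Function.update_self]
  have hφidm1 : ∀ t, φ t idm1 = ξ t := by
    intro t; simp [hφ, Function.update_self]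
  have hφother : ∀ t, ∀ i : Fin (m + 2), i ≠ idm → i ≠ idm1 → φ t i = x i := by
    intro t i h1 h2
    simp [hφ, Function.update_of_ne h2, Function.update_of_ne h1]
  have hcoord : ∀ t, (fun i : Fin (m + 1) => φ t ⟨(i : ℕ), by omega⟩) = Fin.snoc x' t := by
    intro t; funext i
    by_cases h : (i : ℕ) < m
    · have e1 : (⟨(i : ℕ), by omega⟩ : Fin (m + 2)) ≠ idm := by
        simp only [hidm, ne_eq, Fin.mk.injEq]; omega
      have e2 : (⟨(i : ℕ), by omega⟩ : Fin (m + 2)) ≠ idm1 := by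
        simp only [hidm1, ne_eq, Fin.mk.injEq]; omega
      rw [hφother t _ e1 e2]
      simp [Fin.snoc, h, hx']
    · have hi : (i : ℕ) = m := by omega
      have e1 : (⟨(i : ℕ), by omega⟩ : Fin (m + 2)) = idm := by
        simp only [hidm, Fin.mk.injEq]; omega
      rw [e1, hφidm t]
      simp [Fin.snoc, h]
  have v1 : (Pi.single idm1 (1:ℝ) : Fin (m + 2) → ℝ) idm = 0 := Pi.single_eq_of_ne hne 1
  have v2 : (Pi.single idm (1:ℝ) : Fin (m + 2) → ℝ) idm1 = 0 := Pi.single_eq_of_ne (Ne.symm hne) 1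
  have hvec : ∀ t, HasDerivAt φ
      ((Pi.single idm (1:ℝ) : Fin (m + 2) → ℝ)
        + (-α t * ξ t - β t) • (Pi.single idm1 (1:ℝ) : Fin (m + 2) → ℝ)) t := by
    intro t
    rw [hasDerivAt_pi]
    intro i
    rcases eq_or_ne i idm with h1 | h1
    · subst h1
      have heq : (fun s : ℝ => φ s idm) = fun s => s := funext hφidm
      rw [heq]
      simp only [Pi.add_apply, Pi.smul_apply, Pi.single_eq_same, v1, smul_zero, add_zero]
      exact hasDerivAt_id t
    · rcases eq_or_ne i idm1 with h2 | h2
      · subst h2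
        have heq : (fun s : ℝ => φ s idm1) = ξ := funext hφidm1
        rw [heq]
        simp only [Pi.add_apply, Pi.smul_apply, Pi.single_eq_same, v2, smul_eq_mul, mul_one,
          zero_add]
        exact hξ' t
      · have heq : (fun s : ℝ => φ s i) = fun _ => x i := funext fun s => hφother s i h1 h2
        rw [heq]
        simp only [Pi.add_apply, Pi.smul_apply, Pi.single_eq_of_ne h1, Pi.single_eq_of_ne h2,
          smul_zero, add_zero, zero_add]
        exact hasDerivAt_const t (x i)
  have hHd : Differentiable ℝ H := hH.differentiable one_ne_zero
  set ψ : ℝ → ℝ := fun t => H (φ t) with hψ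
  have hψ' : ∀ t, HasDerivAt ψ 0 t := by
    intro t
    have h0 : HasDerivAt (H ∘ φ)
        (fderiv ℝ H (φ t) ((Pi.single idm (1:ℝ) : Fin (m + 2) → ℝ)
          + (-α t * ξ t - β t) • (Pi.single idm1 (1:ℝ) : Fin (m + 2) → ℝ))) t :=
      ((hHd (φ t)).hasFDerivAt).comp_hasDerivAt t (hvec t)
    have h2 : fderiv ℝ H (φ t) (Pi.single idm (1:ℝ))
        = (a (fun i : Fin (m + 1) => φ t ⟨(i : ℕ), by omega⟩) * φ t idm1
           + b (fun i : Fin (m + 1) => φ t ⟨(i : ℕ), by omega⟩))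
          * fderiv ℝ H (φ t) (Pi.single idm1 (1:ℝ)) := hpde (φ t)
    rw [hcoord t, hφidm1 t] at h2
    have hval : fderiv ℝ H (φ t) ((Pi.single idm (1:ℝ) : Fin (m + 2) → ℝ)
          + (-α t * ξ t - β t) • (Pi.single idm1 (1:ℝ) : Fin (m + 2) → ℝ)) = 0 := by
      rw [map_add, map_smul, smul_eq_mul, h2]
      simp only [hα, hβ]
      ring
    rw [hval] at h0
    exact h0
  have hψd : Differentiable ℝ ψ := fun t => (hψ' t).differentiableAt
  have hψ0 : ∀ t, deriv ψ t = 0 := fun t => (hψ' t).deriv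
  have hconst : ψ T = ψ 0 := is_const_of_deriv_eq_zero hψd hψ0 T 0
  have hξT : ξ T = x idm1 := by
    simp only [hξ, hC]
    linear_combination (x idm1) * hexp T
  have hφT : φ T = x := by
    funext i
    rcases eq_or_ne i idm with h1 | h1
    · subst h1; rw [hφidm T, hT]
    · rcases eq_or_ne i idm1 with h2 | h2
      · subst h2; rw [hφidm1 T, hξT]
      · exact hφother T i h1 h2
  have hξ0 : ξ 0 = C := by
    simp [hξ, hA, hB]
  calc H x = ψ T := (congrArg H hφT).symm
    _ = ψ 0 := hconst
    _ = _ := by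
        refine congrArg H ?_
        funext i
        rcases eq_or_ne i idm1 with h2 | h2
        · subst h2
          rw [hφidm1 0, hξ0, Function.update_self]
        · rcases eq_or_ne i idm with h1 | h1
          · subst h1
            rw [hφidm 0, Function.update_of_ne hne, Function.update_self]
          · rw [hφother 0 i h1 h2, Function.update_of_ne h2, Function.update_of_ne h1]
end

section
/- Let a, b : ℝ → ℝ be continuous and H : ℝ² → ℝ be continuously differentiable with ∂₁H(u,v) = (a(u)·v + b(u))·∂₂H(u,v) for all (u,v) ∈ ℝ². Then H(u,v) = H(0, exp(∫₀^u a) · v + ∫₀^u b(t) · exp(∫₀^t a) dt) for all (u,v). -/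
open Real intervalIntegral

lemma primitive_hasDerivAt {f : ℝ → ℝ} (hf : Continuous f) (x : ℝ) :
    HasDerivAt (fun u => ∫ t in (0:ℝ)..u, f t) (f x) x :=
  integral_hasDerivAt_right (hf.intervalIntegrable 0 x)
    (hf.stronglyMeasurableAtFilter _ _) hf.continuousAt

/-- Two-variable case of the PDE normal-form lemma. -/
theorem pde_normal_form_two_vars
    (H : ℝ × ℝ → ℝ) (a b : ℝ → ℝ)
    (hH : ContDiff ℝ 1 H) (ha : Continuous a) (hb : Continuous b)
    (hpde : ∀ u v : ℝ,
      fderiv ℝ H (u, v) (1, 0)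
        = (a u * v + b u) * fderiv ℝ H (u, v) (0, 1)) :
    ∀ u v : ℝ,
      H (u, v) = H (0,
        Real.exp (∫ t in (0:ℝ)..u, a t) * v
          + ∫ t in (0:ℝ)..u, b t * Real.exp (∫ s in (0:ℝ)..t, a s)) := by
  intro u v
  set A : ℝ → ℝ := fun s => ∫ t in (0:ℝ)..s, a t with hAdef
  have hAd : ∀ s, HasDerivAt A (a s) s := primitive_hasDerivAt ha
  have hAc : Continuous A := by
    rw [continuous_iff_continuousAt]; exact fun s => (hAd s).continuousAt
  have hbe : Continuous (fun t => b t * Real.exp (A t)) :=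
    hb.mul (Real.continuous_exp.comp hAc)
  set B : ℝ → ℝ := fun s => ∫ t in (0:ℝ)..s, b t * Real.exp (A t) with hBdef
  have hBd : ∀ s, HasDerivAt B (b s * Real.exp (A s)) s := primitive_hasDerivAt hbe
  set w : ℝ := Real.exp (A u) * v + B u with hwdef
  set φ : ℝ → ℝ := fun s => Real.exp (-A s) * (w - B s) with hφdef
  have hφd : ∀ s, HasDerivAt φ (-(a s * φ s + b s)) s := by
    intro s
    have h1 : HasDerivAt (fun s => Real.exp (-A s)) (Real.exp (-A s) * (-a s)) s :=
      ((hAd s).neg).exp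
    have h2 : HasDerivAt (fun s => w - B s) (0 - b s * Real.exp (A s)) s :=
      (hasDerivAt_const s w).sub (hBd s)
    have h3 := h1.mul h2
    refine h3.congr_deriv ?_
    have hE : Real.exp (A s) * Real.exp (-A s) = 1 := by rw [← Real.exp_add]; simp
    have hφs : φ s = Real.exp (-A s) * (w - B s) := rfl
    linear_combination (a s) * hφs - (b s) * hE
  set ψ : ℝ → ℝ := fun s => H (s, φ s) with hψdef
  have hψd : ∀ s, HasDerivAt ψ 0 s := by
    intro s
    have hHd : DifferentiableAt ℝ H (s, φ s) := hH.differentiable one_ne_zero (s, φ s)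
    have h2 : HasDerivAt (fun s => (s, φ s)) ((1 : ℝ), -(a s * φ s + b s)) s :=
      HasDerivAt.prodMk (hasDerivAt_id s) (hφd s)
    have h3 := hHd.hasFDerivAt.comp_hasDerivAt s h2
    have hvec : ((1 : ℝ), -(a s * φ s + b s))
        = (1, 0) + (-(a s * φ s + b s)) • ((0 : ℝ), (1 : ℝ)) := by
      simp [Prod.ext_iff]
    have hzero : fderiv ℝ H (s, φ s) ((1 : ℝ), -(a s * φ s + b s)) = 0 := by
      rw [hvec, (fderiv ℝ H (s, φ s)).map_add, (fderiv ℝ H (s, φ s)).map_smul,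
        hpde s (φ s)]
      simp
      ring
    rw [hzero] at h3
    exact h3
  have hconst : ψ u = ψ 0 :=
    is_const_of_deriv_eq_zero (fun s => (hψd s).differentiableAt)
      (fun s => (hψd s).deriv) u 0
  have hA0 : A 0 = 0 := by simp [hAdef]
  have hB0 : B 0 = 0 := by simp [hBdef]
  have hφu : φ u = v := by
    simp only [hφdef, hwdef, Real.exp_neg]
    field_simp
    ring
  have hφ0 : φ 0 = w := by simp [hφdef, hA0, hB0]
  calc H (u, v) = ψ u := by rw [hψdef]; simp [hφu]
    _ = ψ 0 := hconst
    _ = H (0, w) := by rw [hψdef]; simp [hφ0]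
end

section
/- Let g : ℝⁿ → ℝ be continuously differentiable and suppose that for all ξ ∈ I and all γ ∈ ℝⁿ, 0 = Σ_{j=1}^n ∂_j g(γ₁,…,γₙ) · φ_j(ξ, γ₁,…,γ_{j-1}), where for some points ĉ₁,…,ĉ_{n-1} ∈ ℝ the functions φ₁, φ₂(·,ĉ₁), …, φₙ(·,ĉ₁,…,ĉ_{n-1}) are linearly independent on I. Then g is constant. -/
noncomputable def flowAux (n : ℕ) (f : ℕ → (Fin n → ℝ) → ℝ) (c : ℕ → ℝ) : ℕ → ℝ → ℝ
  | k => fun t => c k + ∫ s in (0:ℝ)..t,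
      f k (fun i : Fin n => if _ : (i : ℕ) < k then flowAux n f c i s else 0)
  termination_by k => k

variable {n : ℕ} {f : ℕ → (Fin n → ℝ) → ℝ} {c : ℕ → ℝ}

theorem flowAux_trunc_continuous (hf : ∀ k, Continuous (f k)) :
    ∀ k, Continuous (fun s => f k
      (fun i : Fin n => if _ : (i : ℕ) < k then flowAux n f c i s else 0)) ∧
      Continuous (flowAux n f c k) := by
  intro k
  induction k using Nat.strong_induction_on with
  | _ k ih =>
    have htr : Continuous (fun s => f k
        (fun i : Fin n => if _ : (i : ℕ) < k then flowAux n f c i s else 0)) := by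
      apply (hf k).comp
      apply continuous_pi
      intro i
      by_cases h : (i : ℕ) < k
      · simpa [h] using (ih i h).2
      · simp [h]; exact continuous_const
    refine ⟨htr, ?_⟩
    have : Continuous (fun t => c k + ∫ s in (0:ℝ)..t,
        f k (fun i : Fin n => if _ : (i : ℕ) < k then flowAux n f c i s else 0)) :=
      continuous_const.add
        (intervalIntegral.continuous_primitive (fun a b => (htr.intervalIntegrable a b)) 0)
    convert this using 1
    funext t
    rw [flowAux]

theorem flowAux_hasDerivAt (hf : ∀ k, Continuous (f k)) (k : ℕ) (t : ℝ) :
    HasDerivAt (flowAux n f c k)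
      (f k (fun i : Fin n => if _ : (i : ℕ) < k then flowAux n f c i t else 0)) t := by
  have htr := (flowAux_trunc_continuous (c := c) hf k).1
  have h1 := (htr.integral_hasStrictDerivAt 0 t).hasDerivAt.const_add (c k)
  rw [show flowAux n f c k = fun u => c k + ∫ s in (0:ℝ)..u,
      f k (fun i : Fin n => if _ : (i : ℕ) < k then flowAux n f c i s else 0) from
    funext fun u => by rw [flowAux]]
  exact h1

theorem flowAux_zero_eq (k : ℕ) : flowAux n f c k 0 = c k := by
  rw [flowAux]; simp

theorem fderiv_eval {N : ℕ} (g : (Fin N → ℝ) → ℝ) (x v : Fin N → ℝ) :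
    fderiv ℝ g x v = ∑ j, v j * fderiv ℝ g x (Pi.single j 1) := by
  have hv : v = ∑ j, v j • (Pi.single j 1 : Fin N → ℝ) := by
    funext i
    simp [Pi.single_apply, Finset.sum_apply]
  conv_lhs => rw [hv]
  rw [map_sum]
  refine Finset.sum_congr rfl fun j _ => ?_
  rw [(fderiv ℝ g x).map_smul, smul_eq_mul]

theorem flow_reach (m : ℕ) (P : Type) (φ : Fin (m+1) → P → (Fin (m+1) → ℝ) → ℝ)
    (hcont : ∀ (k : Fin (m+1)) (p : P), Continuous (φ k p))
    (hhier : ∀ (k : Fin (m+1)) (p : P) (γ γ' : Fin (m+1) → ℝ),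
      (∀ i : Fin (m+1), (i : ℕ) < (k : ℕ) → γ i = γ' i) → φ k p γ = φ k p γ')
    (g : (Fin (m+1) → ℝ) → ℝ) (hg : ContDiff ℝ 1 g)
    (hann : ∀ (p : P) (γ : Fin (m+1) → ℝ),
      (∑ j : Fin (m+1), fderiv ℝ g γ (Pi.single j 1) * φ j p γ) = 0)
    (chat : Fin (m+1) → ℝ) (p0 : P) (hp0 : φ 0 p0 chat ≠ 0) (γ : Fin (m+1) → ℝ) :
    ∃ x : Fin (m+1) → ℝ, x 0 = chat 0 ∧ g γ = g x := by
  classical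
  set fns : ℕ → (Fin (m+1) → ℝ) → ℝ :=
    fun k => if h : k < m+1 then φ ⟨k, h⟩ p0 else 0 with hfns_def
  set c : ℕ → ℝ := fun k => if h : k < m+1 then γ ⟨k, h⟩ else 0 with hc_def
  have hfns : ∀ k, Continuous (fns k) := by
    intro k
    by_cases h : k < m+1
    · simp only [hfns_def, dif_pos h]; exact hcont ⟨k, h⟩ p0
    · simp only [hfns_def, dif_neg h]; exact continuous_const
  set Γ : ℝ → Fin (m+1) → ℝ := fun t i => flowAux (m+1) fns c i t with hΓ_def
  have hΓd : ∀ t, HasDerivAt Γ (fun i => φ i p0 (Γ t)) t := by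
    intro t
    apply hasDerivAt_pi.2
    intro i
    have h := flowAux_hasDerivAt (f := fns) (c := c) hfns i t
    have hval : fns i (fun j : Fin (m+1) =>
        if _ : (j : ℕ) < (i : ℕ) then flowAux (m+1) fns c j t else 0) = φ i p0 (Γ t) := by
      have hi : (i : ℕ) < m + 1 := i.isLt
      simp only [hfns_def, dif_pos hi]
      have : (⟨(i : ℕ), hi⟩ : Fin (m+1)) = i := by ext; rfl
      rw [this]
      apply hhier
      intro j hj
      simp only [dif_pos hj, hΓ_def]; rfl
    rw [← hval]
    exact h
  have hgΓ : ∀ t, HasDerivAt (fun t => g (Γ t)) 0 t := by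
    intro t
    have hd := ((hg.differentiable one_ne_zero) (Γ t)).hasFDerivAt
    have hcomp := hd.comp_hasDerivAt t (hΓd t)
    have hzero : fderiv ℝ g (Γ t) (fun i => φ i p0 (Γ t)) = 0 := by
      rw [fderiv_eval]
      rw [← hann p0 (Γ t)]
      exact Finset.sum_congr rfl fun j _ => mul_comm _ _
    rwa [hzero] at hcomp
  have hconst : ∀ t t', g (Γ t) = g (Γ t') := fun t t' =>
    is_const_of_deriv_eq_zero (fun x => (hgΓ x).differentiableAt)
      (fun x => (hgΓ x).deriv) t t'
  have hΓ0 : Γ 0 = γ := by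
    funext i
    simp [hΓ_def, flowAux_zero_eq, hc_def, i.isLt, not_lt.2 (Nat.lt_succ_iff.mp i.isLt)]
  have hcoord : ∀ t, Γ t 0 = γ 0 + t * φ 0 p0 chat := by
    intro t
    show flowAux (m+1) fns c 0 t = _
    rw [flowAux]
    have hint : ∀ s : ℝ, fns 0 (fun i : Fin (m+1) =>
        if _ : (i : ℕ) < 0 then flowAux (m+1) fns c i s else 0) = φ 0 p0 chat := by
      intro s
      simp only [hfns_def, dif_pos (Nat.succ_pos m)]
      exact hhier 0 p0 _ _ (fun i hi => absurd hi (Nat.not_lt_zero _))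
    simp only [hint]
    rw [intervalIntegral.integral_const]
    have : c 0 = γ 0 := by simp [hc_def]
    rw [this]
    simp [smul_eq_mul]
  refine ⟨Γ ((chat 0 - γ 0) / φ 0 p0 chat), ?_, ?_⟩
  · rw [hcoord]; field_simp; ring
  · rw [← hΓ0]; exact hconst 0 _

theorem hyperplane_const (m : ℕ) (P : Type) (φ : Fin (m+1) → P → (Fin (m+1) → ℝ) → ℝ)
    (hcont : ∀ (k : Fin (m+1)) (p : P), Continuous (φ k p))
    (hhier : ∀ (k : Fin (m+1)) (p : P) (γ γ' : Fin (m+1) → ℝ),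
      (∀ i : Fin (m+1), (i : ℕ) < (k : ℕ) → γ i = γ' i) → φ k p γ = φ k p γ')
    (g : (Fin (m+1) → ℝ) → ℝ) (hg : ContDiff ℝ 1 g)
    (hann : ∀ (p : P) (γ : Fin (m+1) → ℝ),
      (∑ j : Fin (m+1), fderiv ℝ g γ (Pi.single j 1) * φ j p γ) = 0)
    (chat : Fin (m+1) → ℝ)
    (hindep : LinearIndependent ℝ (fun k : Fin (m+1) => (fun p => φ k p chat)))
    (IH : ∀ (P' : Type) (ψ : Fin m → P' → (Fin m → ℝ) → ℝ),
      (∀ (k : Fin m) (p : P'), Continuous (ψ k p)) →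
      (∀ (k : Fin m) (p : P') (β β' : Fin m → ℝ),
        (∀ i : Fin m, (i : ℕ) < (k : ℕ) → β i = β' i) → ψ k p β = ψ k p β') →
      ∀ (g' : (Fin m → ℝ) → ℝ), ContDiff ℝ 1 g' →
      (∀ (p : P') (β : Fin m → ℝ),
        (∑ j : Fin m, fderiv ℝ g' β (Pi.single j 1) * ψ j p β) = 0) →
      ∀ (chat' : Fin m → ℝ),
        LinearIndependent ℝ (fun k : Fin m => (fun p => ψ k p chat')) →
      ∀ β β' : Fin m → ℝ, g' β = g' β') :
    ∀ β β' : Fin m → ℝ, g (Fin.cons (chat 0) β) = g (Fin.cons (chat 0) β') := by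
  classical
  -- the nonzero point for φ 0
  have hne : (fun p => φ 0 p chat) ≠ 0 := hindep.ne_zero 0
  obtain ⟨p0, hp0⟩ : ∃ p, φ 0 p chat ≠ 0 := by
    by_contra h
    push_neg at h
    exact hne (funext fun p => h p)
  -- the affine embedding and its derivative
  set E : (Fin m → ℝ) → (Fin (m+1) → ℝ) := fun β => Fin.cons (chat 0) β with hE_def
  set A : ((Fin m → ℝ) →L[ℝ] (Fin (m+1) → ℝ)) :=
    ContinuousLinearMap.pi (fun i : Fin (m+1) =>
      Fin.cases 0 (fun j => ContinuousLinearMap.proj j) i) with hA_def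
  have hA : ∀ β, A β = Fin.cons 0 β := by
    intro β
    funext i
    rw [hA_def, ContinuousLinearMap.pi_apply]
    induction i using Fin.cases with
    | zero => simp
    | succ j => simp
  have hEadd : E = fun β => Fin.cons (chat 0) (0 : Fin m → ℝ) + A β := by
    funext β i
    rw [hE_def]
    simp only [Pi.add_apply, hA]
    induction i using Fin.cases with
    | zero => simp
    | succ j => simp
  have hEcont : Continuous E := by
    rw [hEadd]; exact continuous_const.add A.continuous
  have hE_fderiv : ∀ β, HasFDerivAt E A β := by
    intro β
    rw [hEadd]
    exact (A.hasFDerivAt).const_add _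
  have hAsingle : ∀ k : Fin m, A (Pi.single k (1:ℝ)) = Pi.single k.succ (1:ℝ) := by
    intro k
    rw [hA]
    funext i
    induction i using Fin.cases with
    | zero =>
      rw [Fin.cons_zero, Pi.single_eq_of_ne (Fin.succ_ne_zero k).symm]
    | succ j =>
      rw [Fin.cons_succ]
      simp [Pi.single_apply, Fin.succ_inj]
  set g' : (Fin m → ℝ) → ℝ := fun β => g (E β) with hg'_def
  have hg' : ContDiff ℝ 1 g' := by
    rw [hg'_def, hEadd]
    exact hg.comp (contDiff_const.add A.contDiff)
  have hfd : ∀ (β : Fin m → ℝ) (k : Fin m),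
      fderiv ℝ g' β (Pi.single k (1:ℝ)) = fderiv ℝ g (E β) (Pi.single k.succ (1:ℝ)) := by
    intro β k
    have h1 : HasFDerivAt g' ((fderiv ℝ g (E β)).comp A) β :=
      (((hg.differentiable one_ne_zero) (E β)).hasFDerivAt).comp β (hE_fderiv β)
    rw [h1.fderiv, ContinuousLinearMap.comp_apply, hAsingle]
  -- reduced parameter space and fields
  set P' : Type := {w : P →₀ ℝ // (w.sum fun p a => a * φ 0 p chat) = 0} with hP'_def
  set ψ : Fin m → P' → (Fin m → ℝ) → ℝ :=
    fun k w β => w.1.sum fun p a => a * φ k.succ p (E β) with hψ_def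
  have hψsum : ∀ (k : Fin m) (w : P') (β : Fin m → ℝ),
      ψ k w β = ∑ p ∈ w.1.support, w.1 p * φ k.succ p (E β) := fun k w β => rfl
  have hψcont : ∀ (k : Fin m) (w : P'), Continuous (ψ k w) := by
    intro k w
    have heq : (ψ k w) = fun β => ∑ p ∈ w.1.support, w.1 p * φ k.succ p (E β) :=
      funext (hψsum k w)
    rw [heq]
    exact continuous_finset_sum _ fun p _ =>
      continuous_const.mul ((hcont k.succ p).comp hEcont)
  have hψhier : ∀ (k : Fin m) (w : P') (β β' : Fin m → ℝ),
      (∀ i : Fin m, (i : ℕ) < (k : ℕ) → β i = β' i) → ψ k w β = ψ k w β' := by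
    intro k w β β' hag
    simp only [hψsum]
    refine Finset.sum_congr rfl fun p _ => ?_
    congr 1
    apply hhier
    intro i hi
    induction i using Fin.cases with
    | zero => simp [hE_def]
    | succ j =>
      simp only [hE_def, Fin.cons_succ]
      exact hag j (by simpa [Fin.val_succ, Nat.succ_lt_succ_iff] using hi)
  have hψann : ∀ (w : P') (β : Fin m → ℝ),
      (∑ j : Fin m, fderiv ℝ g' β (Pi.single j 1) * ψ j w β) = 0 := by
    intro w β
    have key : ∀ p : P,
        (∑ k : Fin m, fderiv ℝ g (E β) (Pi.single k.succ 1) * φ k.succ p (E β))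
          = -(fderiv ℝ g (E β) (Pi.single 0 1) * φ 0 p chat) := by
      intro p
      have h0 := hann p (E β)
      rw [Fin.sum_univ_succ] at h0
      have hφ0 : φ 0 p (E β) = φ 0 p chat :=
        hhier 0 p _ _ (fun i hi => absurd hi (Nat.not_lt_zero _))
      rw [hφ0] at h0
      linarith
    calc (∑ k : Fin m, fderiv ℝ g' β (Pi.single k 1) * ψ k w β)
        = ∑ k : Fin m, ∑ p ∈ w.1.support,
            w.1 p * (fderiv ℝ g (E β) (Pi.single k.succ 1) * φ k.succ p (E β)) := by
          refine Finset.sum_congr rfl fun k _ => ?_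
          rw [hfd, hψsum, Finset.mul_sum]
          exact Finset.sum_congr rfl fun p _ => by ring
      _ = ∑ p ∈ w.1.support,
            w.1 p * (∑ k : Fin m, fderiv ℝ g (E β) (Pi.single k.succ 1) * φ k.succ p (E β)) := by
          rw [Finset.sum_comm]
          exact Finset.sum_congr rfl fun p _ => by rw [Finset.mul_sum]
      _ = ∑ p ∈ w.1.support,
            (-(fderiv ℝ g (E β) (Pi.single 0 1))) * (w.1 p * φ 0 p chat) := by
          refine Finset.sum_congr rfl fun p _ => ?_
          rw [key p]
          ring
      _ = (-(fderiv ℝ g (E β) (Pi.single 0 1))) * ∑ p ∈ w.1.support, w.1 p * φ 0 p chat := by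
          rw [Finset.mul_sum]
      _ = 0 := by
          have hw := w.2
          have : (w.1.sum fun p a => a * φ 0 p chat)
              = ∑ p ∈ w.1.support, w.1 p * φ 0 p chat := rfl
          rw [this] at hw
          rw [hw, mul_zero]
  -- independence of the reduced family
  have hEtail : E (Fin.tail chat) = chat := Fin.cons_self_tail chat
  have hψindep : LinearIndependent ℝ (fun k : Fin m => (fun w : P' => ψ k w (Fin.tail chat))) := by
    rw [Fintype.linearIndependent_iff]
    intro d hd
    set F : P → ℝ := fun p => ∑ k : Fin m, d k * φ k.succ p chat with hF_def
    have hw : ∀ w : P', ∑ p ∈ w.1.support, w.1 p * F p = 0 := by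
      intro w
      have h1 := congrFun hd w
      simp only [Finset.sum_apply, Pi.smul_apply, smul_eq_mul, Pi.zero_apply] at h1
      have h2 : ∑ k : Fin m, d k * ψ k w (Fin.tail chat)
          = ∑ p ∈ w.1.support, w.1 p * F p := by
        simp only [hψsum, hEtail, hF_def, Finset.mul_sum]
        rw [Finset.sum_comm]
        exact Finset.sum_congr rfl fun p _ => Finset.sum_congr rfl fun k _ => by ring
      rw [← h2, h1]
    have hrel : ∀ q : P, φ 0 p0 chat * F q - φ 0 q chat * F p0 = 0 := by
      intro q
      set wq : P →₀ ℝ :=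
        Finsupp.single q (φ 0 p0 chat) - Finsupp.single p0 (φ 0 q chat) with hwq_def
      have hsum0 : ∀ (G : P → ℝ), wq.sum (fun p a => a * G p)
          = φ 0 p0 chat * G q - φ 0 q chat * G p0 := by
        intro G
        rw [hwq_def, Finsupp.sum_sub_index (fun a b1 b2 => by ring),
          Finsupp.sum_single_index (by ring), Finsupp.sum_single_index (by ring)]
      have hmem : (wq.sum fun p a => a * φ 0 p chat) = 0 := by
        rw [hsum0]; ring
      have := hw ⟨wq, hmem⟩
      have hsum' : ∑ p ∈ wq.support, wq p * F p = wq.sum (fun p a => a * F p) := rfl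
      rw [hsum', hsum0] at this
      exact this
    set lam : ℝ := F p0 / φ 0 p0 chat with hlam_def
    have hF : ∀ q : P, F q = lam * φ 0 q chat := by
      intro q
      have h := hrel q
      rw [hlam_def]
      field_simp
      linarith
    set dd : Fin (m+1) → ℝ := Fin.cons (-lam) d with hdd_def
    have hdd : ∑ j : Fin (m+1), dd j • (fun p => φ j p chat) = 0 := by
      funext p
      simp only [Finset.sum_apply, Pi.smul_apply, smul_eq_mul, Pi.zero_apply]
      rw [Fin.sum_univ_succ]
      simp only [hdd_def, Fin.cons_zero, Fin.cons_succ]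
      have : ∑ k : Fin m, d k * φ k.succ p chat = F p := rfl
      rw [this, hF p]
      ring
    have hzero := Fintype.linearIndependent_iff.1 hindep dd hdd
    intro k
    have := hzero k.succ
    rwa [hdd_def, Fin.cons_succ] at this
  -- apply the inductive hypothesis
  intro β β'
  exact IH P' ψ hψcont hψhier g' hg' hψann (Fin.tail chat) hψindep β β'


theorem genLemma : ∀ (n : ℕ) (P : Type) (φ : Fin n → P → (Fin n → ℝ) → ℝ),
    (∀ (k : Fin n) (p : P), Continuous (φ k p)) →
    (∀ (k : Fin n) (p : P) (γ γ' : Fin n → ℝ),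
      (∀ i : Fin n, (i : ℕ) < (k : ℕ) → γ i = γ' i) → φ k p γ = φ k p γ') →
    ∀ (g : (Fin n → ℝ) → ℝ), ContDiff ℝ 1 g →
    (∀ (p : P) (γ : Fin n → ℝ),
      (∑ j : Fin n, fderiv ℝ g γ (Pi.single j 1) * φ j p γ) = 0) →
    ∀ (chat : Fin n → ℝ),
      LinearIndependent ℝ (fun k : Fin n => (fun p => φ k p chat)) →
    ∀ γ γ' : Fin n → ℝ, g γ = g γ' := by
  intro n
  induction n with
  | zero =>
    intro P φ _ _ g _ _ _ _ γ γ'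
    have : γ = γ' := funext fun i => i.elim0
    rw [this]
  | succ m ih =>
    intro P φ hcont hhier g hg hann chat hindep γ γ'
    have hne : (fun p => φ 0 p chat) ≠ 0 := hindep.ne_zero 0
    obtain ⟨p0, hp0⟩ : ∃ p, φ 0 p chat ≠ 0 := by
      by_contra h
      push_neg at h
      exact hne (funext fun p => h p)
    have hplane := hyperplane_const m P φ hcont hhier g hg hann chat hindep ih
    obtain ⟨x, hx0, hgx⟩ := flow_reach m P φ hcont hhier g hg hann chat p0 hp0 γ
    obtain ⟨x', hx0', hgx'⟩ := flow_reach m P φ hcont hhier g hg hann chat p0 hp0 γ'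
    rw [hgx, hgx']
    have ex : x = Fin.cons (chat 0) (Fin.tail x) := by
      rw [← hx0]
      exact (Fin.cons_self_tail x).symm
    have ex' : x' = Fin.cons (chat 0) (Fin.tail x') := by
      rw [← hx0']
      exact (Fin.cons_self_tail x').symm
    rw [ex, ex']
    exact hplane _ _



/-- Infinitesimal version of the quadrature-invariance lemma: a C¹ function
annihilated by an independent hierarchical family of directions is constant. -/
theorem annihilated_by_hierarchical_family_constant
    (n : ℕ) (I : Set ℝ) (hI : I.OrdConnected)
    (φ : Fin n → ℝ → (Fin n → ℝ) → ℝ)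
    (hcont : ∀ j : Fin n, Continuous (fun p : ℝ × (Fin n → ℝ) => φ j p.1 p.2))
    (hhier : ∀ j : Fin n, ∀ t : ℝ, ∀ γ γ' : Fin n → ℝ,
      (∀ i : Fin n, (i : ℕ) < (j : ℕ) → γ i = γ' i) → φ j t γ = φ j t γ')
    (g : (Fin n → ℝ) → ℝ) (hg : ContDiff ℝ 1 g)
    (hann : ∀ ξ ∈ I, ∀ γ : Fin n → ℝ,
      (∑ j : Fin n, fderiv ℝ g γ (Pi.single j 1) * φ j ξ γ) = 0)
    (hindep : ∃ chat : Fin n → ℝ,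
      LinearIndependent ℝ (fun j : Fin n => I.restrict (fun x => φ j x chat))) :
    ∀ γ γ' : Fin n → ℝ, g γ = g γ' := by
  obtain ⟨chat, hchat⟩ := hindep
  have := genLemma n I (fun k p v => φ k (p : ℝ) v)
    (fun k p => (hcont k).comp (Continuous.prodMk_right (p : ℝ)))
    (fun k p γ γ' h => hhier k p γ γ' h)
    g hg
    (fun p γ => hann (p : ℝ) p.2 γ)
    chat hchat
  exact this
end

section
/- Let g : ℝ² → ℝ be continuously differentiable and suppose ∂₁g(γ₁,γ₂)·φ₁(ξ) + ∂₂g(γ₁,γ₂)·φ₂(ξ,γ₁) = 0 for all ξ ∈ I, γ₁, γ₂ ∈ ℝ, where φ₁ : I → ℝ and φ₂ : I × ℝ → ℝ are continuous and there exists ĉ₁ ∈ ℝ with φ₁ and φ₂(·, ĉ₁) linearly independent on I. Then g is constant. -/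
/-- Two-variable case of the independence lemma. -/
theorem annihilated_two_vars_constant
    (I : Set ℝ) (hI : I.OrdConnected)
    (φ₁ : ℝ → ℝ) (φ₂ : ℝ → ℝ → ℝ)
    (hφ₁ : Continuous φ₁)
    (hφ₂ : Continuous (fun p : ℝ × ℝ => φ₂ p.1 p.2))
    (g : ℝ × ℝ → ℝ) (hg : ContDiff ℝ 1 g)
    (hann : ∀ ξ ∈ I, ∀ γ₁ γ₂ : ℝ,
      fderiv ℝ g (γ₁, γ₂) (1, 0) * φ₁ ξ
        + fderiv ℝ g (γ₁, γ₂) (0, 1) * φ₂ ξ γ₁ = 0)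
    (hindep : ∃ c₁ : ℝ, LinearIndependent ℝ
      ![I.restrict φ₁, I.restrict (fun x => φ₂ x c₁)]) :
    ∀ p q : ℝ × ℝ, g p = g q := by
  obtain ⟨c₁, hli⟩ := hindep
  have hgd : Differentiable ℝ g := hg.differentiable one_ne_zero
  -- φ₁ is not identically zero on I
  have hφne : ∃ ξ ∈ I, φ₁ ξ ≠ 0 := by
    by_contra h
    push_neg at h
    have : I.restrict φ₁ = 0 := funext fun x => h x x.2
    exact (hli.ne_zero 0) (by simpa using this)
  obtain ⟨ξ₀, hξ₀I, hξ₀⟩ := hφne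
  -- gradient vanishes on the line γ₁ = c₁
  have hline : ∀ γ₂ : ℝ, fderiv ℝ g (c₁, γ₂) (1, 0) = 0 ∧ fderiv ℝ g (c₁, γ₂) (0, 1) = 0 := by
    intro γ₂
    have h0 : fderiv ℝ g (c₁, γ₂) (1, 0) • I.restrict φ₁
        + fderiv ℝ g (c₁, γ₂) (0, 1) • I.restrict (fun x => φ₂ x c₁) = 0 := by
      funext x
      simpa [mul_comm, Set.restrict] using hann x x.2 c₁ γ₂
    exact hli.eq_zero_of_pair h0
  -- transport coefficient
  set μ : ℝ → ℝ := fun x => φ₂ ξ₀ x / φ₁ ξ₀ with hμdef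
  have hμcont : Continuous μ := (hφ₂.comp (continuous_const.prodMk continuous_id)).div_const _
  have hkey : ∀ x y : ℝ, fderiv ℝ g (x, y) (1, 0) + μ x * fderiv ℝ g (x, y) (0, 1) = 0 := by
    intro x y
    have := hann ξ₀ hξ₀I x y
    have hφ : φ₁ ξ₀ ≠ 0 := hξ₀
    simp only [hμdef]
    field_simp
    linarith [this]
  -- antiderivative of μ
  set M : ℝ → ℝ := fun x => ∫ t in (0:ℝ)..x, μ t with hMdef
  have hM : ∀ x, HasDerivAt M (μ x) x := fun x =>
    intervalIntegral.integral_hasDerivAt_right ((hμcont.intervalIntegrable 0 x))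
      hμcont.aestronglyMeasurable.stronglyMeasurableAtFilter hμcont.continuousAt
  -- the slanted function is constant in x
  have hslant : ∀ y x x' : ℝ, g (x, y + M x) = g (x', y + M x') := by
    intro y
    have hd0 : ∀ x : ℝ, HasDerivAt (fun x => g (x, y + M x)) 0 x := by
      intro x
      have hγ : HasDerivAt (fun x : ℝ => ((x, y + M x) : ℝ × ℝ)) (1, μ x) x :=
        (hasDerivAt_id x).prodMk (zero_add (μ x) ▸ (hasDerivAt_const x y).add (hM x))
      have hcomp : HasDerivAt (fun x => g (x, y + M x))
          (fderiv ℝ g (x, y + M x) (1, μ x)) x :=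
        (hgd _).hasFDerivAt.comp_hasDerivAt x hγ
      have hval : fderiv ℝ g (x, y + M x) (1, μ x) = 0 := by
        have : ((1 : ℝ), μ x) = (1, 0) + μ x • ((0 : ℝ), (1 : ℝ)) := by
          simp [Prod.ext_iff]
        rw [this, map_add, map_smul, smul_eq_mul]
        exact hkey x (y + M x)
      exact hval ▸ hcomp
    exact is_const_of_deriv_eq_zero (fun x => (hd0 x).differentiableAt)
      (fun x => (hd0 x).deriv)
  -- g is constant along the line γ₁ = c₁
  have hvert : ∀ y y' : ℝ, g (c₁, y) = g (c₁, y') := by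
    have hd0 : ∀ y : ℝ, HasDerivAt (fun y => g (c₁, y)) 0 y := by
      intro y
      have hγ : HasDerivAt (fun y : ℝ => ((c₁, y) : ℝ × ℝ)) (0, 1) y :=
        (hasDerivAt_const y c₁).prodMk (hasDerivAt_id y)
      have hcomp : HasDerivAt (fun y => g (c₁, y)) (fderiv ℝ g (c₁, y) (0, 1)) y :=
        (hgd _).hasFDerivAt.comp_hasDerivAt y hγ
      exact (hline y).2 ▸ hcomp
    exact is_const_of_deriv_eq_zero (fun y => (hd0 y).differentiableAt)
      (fun y => (hd0 y).deriv)
  intro p q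
  have hp : g p = g (c₁, 0) := by
    have h1 : g (p.1, (p.2 - M p.1) + M p.1) = g (c₁, (p.2 - M p.1) + M c₁) :=
      hslant (p.2 - M p.1) p.1 c₁
    have h2 : g (p.1, (p.2 - M p.1) + M p.1) = g p := by
      norm_num
    rw [← h2, h1]
    exact hvert _ _
  have hq : g q = g (c₁, 0) := by
    have h1 : g (q.1, (q.2 - M q.1) + M q.1) = g (c₁, (q.2 - M q.1) + M c₁) :=
      hslant (q.2 - M q.1) q.1 c₁
    have h2 : g (q.1, (q.2 - M q.1) + M q.1) = g q := by
      norm_num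
    rw [← h2, h1]
    exact hvert _ _
  rw [hp, hq]
end

section
/- Suppose Q : I → ℝ is continuous and there exist a C² function φ : ℝ → ℝ with φ' nowhere zero and continuous functions p, q : I → ℝ such that for every solution θ : I → ℝ of θ' = cos²θ + Q·sin²θ, the function φ∘θ satisfies (φ∘θ)' + p·(φ∘θ) = q on I. Then Q is constant. -/
open Real

namespace PruferAux

open Set

/-- Derivative of the Prüfer right-hand side in the angle variable. -/
lemma vf_hasDerivAt (c y : ℝ) :
    HasDerivAt (fun y => Real.cos y ^ 2 + c * Real.sin y ^ 2)
      (2 * Real.sin y * Real.cos y * (c - 1)) y := by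
  have h1 : HasDerivAt (fun y => Real.cos y ^ 2)
      ((2 : ℕ) * Real.cos y ^ (2 - 1) * (-Real.sin y)) y :=
    (Real.hasDerivAt_cos y).pow 2
  have h2 : HasDerivAt (fun y => c * Real.sin y ^ 2)
      (c * ((2 : ℕ) * Real.sin y ^ (2 - 1) * Real.cos y)) y :=
    ((Real.hasDerivAt_sin y).pow 2).const_mul c
  have := h1.add h2
  refine this.congr_deriv ?_
  push_cast
  ring

/-- The Prüfer right-hand side is Lipschitz in the angle variable. -/
lemma vf_lipschitz {c M : ℝ} (hc : |c| ≤ M) :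
    LipschitzWith (Real.toNNReal (1 + M))
      (fun y => Real.cos y ^ 2 + c * Real.sin y ^ 2) := by
  have hM : 0 ≤ M := (abs_nonneg c).trans hc
  apply lipschitzWith_of_nnnorm_deriv_le
  · exact fun y => (vf_hasDerivAt c y).differentiableAt
  · intro y
    rw [← NNReal.coe_le_coe, coe_nnnorm, Real.norm_eq_abs,
      Real.coe_toNNReal _ (by linarith), (vf_hasDerivAt c y).deriv]
    have h1 : |2 * Real.sin y * Real.cos y| ≤ 1 := by
      have h := Real.sin_two_mul y
      rw [show 2 * Real.sin y * Real.cos y = Real.sin (2 * y) from h.symm, abs_le]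
      exact ⟨Real.neg_one_le_sin _, Real.sin_le_one _⟩
    have h2 : |c - 1| ≤ M + 1 := by
      rw [abs_le] at *
      constructor <;> linarith [hc.1, hc.2]
    calc |2 * Real.sin y * Real.cos y * (c - 1)|
        = |2 * Real.sin y * Real.cos y| * |c - 1| := abs_mul _ _
      _ ≤ 1 * (M + 1) := by
          apply mul_le_mul h1 h2 (abs_nonneg _) zero_le_one
      _ = 1 + M := by ring

/-- Existence of a solution of the Prüfer equation on a compact subinterval. -/
lemma exists_sol_Icc {I : Set ℝ} (hI : I.OrdConnected) {Q : ℝ → ℝ}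
    (hQ : ContinuousOn Q I) {a b x₀ : ℝ} (ha : a ∈ I) (hb : b ∈ I)
    (hax : a ≤ x₀) (hxb : x₀ ≤ b) (y₀ : ℝ) :
    ∃ f : ℝ → ℝ, f x₀ = y₀ ∧ ∀ t ∈ Icc a b,
      HasDerivWithinAt f (Real.cos (f t) ^ 2 + Q t * Real.sin (f t) ^ 2)
        (Icc a b) t := by
  have hsub : Icc a b ⊆ I := hI.out ha hb
  obtain ⟨C, hC⟩ := isCompact_Icc.exists_bound_of_continuousOn (hQ.mono hsub)
  set M : ℝ := max C 0 with hMdef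
  have hM0 : 0 ≤ M := le_max_right _ _
  have hQM : ∀ t ∈ Icc a b, |Q t| ≤ M := fun t ht =>
    (Real.norm_eq_abs (Q t) ▸ hC t ht).trans (le_max_left _ _)
  have hnn : 0 ≤ (1 + M) * max (b - x₀) (x₀ - a) := by
    apply mul_nonneg (by linarith)
    exact le_trans (by linarith) (le_max_left _ _)
  have hpl : IsPicardLindelof
      (fun t y => Real.cos y ^ 2 + Q t * Real.sin y ^ 2) (tmin := a) (tmax := b)
      ⟨x₀, hax, hxb⟩ y₀ (Real.toNNReal ((1 + M) * max (b - x₀) (x₀ - a))) 0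
      (Real.toNNReal (1 + M)) (Real.toNNReal (1 + M)) := by
    refine ⟨?_, ?_, ?_, ?_⟩
    · intro t ht
      exact (vf_lipschitz (hQM t ht)).lipschitzOnWith
    · intro y _
      exact continuousOn_const.add ((hQ.mono hsub).mul continuousOn_const)
    · intro t ht y _
      rw [Real.norm_eq_abs, Real.coe_toNNReal _ (by linarith)]
      have h1 := Real.sin_sq_le_one y
      have h2 := Real.cos_sq_le_one y
      have h3 := sq_nonneg (Real.sin y)
      have h4 := sq_nonneg (Real.cos y)
      have h5 := abs_le.mp (hQM t ht)
      rw [abs_le]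
      constructor <;> nlinarith [h5.1, h5.2]
    · show ((Real.toNNReal (1 + M)) : ℝ) * max (b - x₀) (x₀ - a) ≤
        ((Real.toNNReal ((1 + M) * max (b - x₀) (x₀ - a))) : ℝ) - ((0 : NNReal) : ℝ)
      rw [Real.coe_toNNReal _ (by linarith), Real.coe_toNNReal _ hnn, NNReal.coe_zero, sub_zero]
  obtain ⟨f, hf0, hf⟩ := hpl.exists_eq_forall_mem_Icc_hasDerivWithinAt₀
  exact ⟨f, hf0, hf⟩

/-- Uniqueness of solutions on a compact interval. -/
lemma sol_unique {Q : ℝ → ℝ} {a b x₀ : ℝ} {M : ℝ}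
    (hM : ∀ t ∈ Icc a b, |Q t| ≤ M) {f g : ℝ → ℝ}
    (hf : ∀ t ∈ Icc a b, HasDerivWithinAt f
      (Real.cos (f t) ^ 2 + Q t * Real.sin (f t) ^ 2) (Icc a b) t)
    (hg : ∀ t ∈ Icc a b, HasDerivWithinAt g
      (Real.cos (g t) ^ 2 + Q t * Real.sin (g t) ^ 2) (Icc a b) t)
    (hx₀ : x₀ ∈ Icc a b) (heq : f x₀ = g x₀) : EqOn f g (Icc a b) := by
  have hab : a ≤ b := hx₀.1.trans hx₀.2
  set v : ℝ → ℝ → ℝ := fun t y =>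
    Real.cos y ^ 2 + Q (max a (min t b)) * Real.sin y ^ 2 with hv
  have hclamp : ∀ t ∈ Icc a b, max a (min t b) = t := by
    intro t ht
    rw [min_eq_left ht.2, max_eq_right ht.1]
  have hvt : ∀ t ∈ Icc a b, ∀ y : ℝ,
      v t y = Real.cos y ^ 2 + Q t * Real.sin y ^ 2 := by
    intro t ht y; rw [hv]; simp only [hclamp t ht]
  have hlip : ∀ t, LipschitzOnWith (Real.toNNReal (1 + M)) (v t)
      ((fun _ : ℝ => (univ : Set ℝ)) t) := by
    intro t
    have hmem : max a (min t b) ∈ Icc a b := by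
      constructor
      · exact le_max_left _ _
      · exact max_le hab (min_le_right _ _)
    exact (vf_lipschitz (hM _ hmem)).lipschitzOnWith
  have hfc : ContinuousOn f (Icc a b) := fun t ht => (hf t ht).continuousWithinAt
  have hgc : ContinuousOn g (Icc a b) := fun t ht => (hg t ht).continuousWithinAt
  have key : EqOn f g (Icc a x₀) ∧ EqOn f g (Icc x₀ b) := by
    constructor
    · apply ODE_solution_unique_of_mem_Icc_left (fun t _ => hlip t)
        (hfc.mono (Icc_subset_Icc_right hx₀.2)) ?_ (fun _ _ => mem_univ _)
        (hgc.mono (Icc_subset_Icc_right hx₀.2)) ?_ (fun _ _ => mem_univ _) heq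
      · intro t ht
        have ht' : t ∈ Icc a b := ⟨ht.1.le, ht.2.trans hx₀.2⟩
        rw [hvt t ht']
        refine (hf t ht').mono_of_mem_nhdsWithin ?_
        exact Icc_mem_nhdsLE_of_mem ⟨ht.1, ht'.2⟩
      · intro t ht
        have ht' : t ∈ Icc a b := ⟨ht.1.le, ht.2.trans hx₀.2⟩
        rw [hvt t ht']
        refine (hg t ht').mono_of_mem_nhdsWithin ?_
        exact Icc_mem_nhdsLE_of_mem ⟨ht.1, ht'.2⟩
    · apply ODE_solution_unique_of_mem_Icc_right (fun t _ => hlip t)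
        (hfc.mono (Icc_subset_Icc_left hx₀.1)) ?_ (fun _ _ => mem_univ _)
        (hgc.mono (Icc_subset_Icc_left hx₀.1)) ?_ (fun _ _ => mem_univ _) heq
      · intro t ht
        have ht' : t ∈ Icc a b := ⟨hx₀.1.trans ht.1, ht.2.le⟩
        rw [hvt t ht']
        refine (hf t ht').mono_of_mem_nhdsWithin ?_
        exact Icc_mem_nhdsGE_of_mem ⟨ht'.1, ht.2⟩
      · intro t ht
        have ht' : t ∈ Icc a b := ⟨hx₀.1.trans ht.1, ht.2.le⟩
        rw [hvt t ht']
        refine (hg t ht').mono_of_mem_nhdsWithin ?_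
        exact Icc_mem_nhdsGE_of_mem ⟨ht'.1, ht.2⟩
  rw [← Icc_union_Icc_eq_Icc hx₀.1 hx₀.2]
  exact key.1.union key.2

/-- Global existence of a solution of the Prüfer equation through a given point,
with full (two-sided) derivatives at interior points of the domain. -/
lemma exists_global {I : Set ℝ} (hI : I.OrdConnected) {Q : ℝ → ℝ}
    (hQ : ContinuousOn Q I) {x₀ : ℝ} (hx₀ : x₀ ∈ I) (y₀ : ℝ) :
    ∃ θ : ℝ → ℝ, θ x₀ = y₀ ∧ ∀ x ∈ interior I,
      HasDerivAt θ (Real.cos (θ x) ^ 2 + Q x * Real.sin (θ x) ^ 2) x := by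
  have H : ∀ x : ℝ, ∃ f : ℝ → ℝ, x ∈ I →
      f x₀ = y₀ ∧ ∀ t ∈ Icc (min x x₀) (max x x₀),
        HasDerivWithinAt f (Real.cos (f t) ^ 2 + Q t * Real.sin (f t) ^ 2)
          (Icc (min x x₀) (max x x₀)) t := by
    intro x
    by_cases hx : x ∈ I
    · have hmin : min x x₀ ∈ I := by rcases min_choice x x₀ with h | h <;> rw [h] <;> assumption
      have hmax : max x x₀ ∈ I := by rcases max_choice x x₀ with h | h <;> rw [h] <;> assumption
      obtain ⟨f, h1, h2⟩ := exists_sol_Icc hI hQ hmin hmax (min_le_right x x₀)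
        (le_max_right x x₀) y₀
      exact ⟨f, fun _ => ⟨h1, h2⟩⟩
    · exact ⟨0, fun h => absurd h hx⟩
  choose sol hsol using H
  set θ : ℝ → ℝ := fun x => sol x x with hθdef
  have key : ∀ a b : ℝ, a ∈ I → b ∈ I → a ≤ x₀ → x₀ ≤ b → ∀ g : ℝ → ℝ,
      g x₀ = y₀ →
      (∀ t ∈ Icc a b, HasDerivWithinAt g
        (Real.cos (g t) ^ 2 + Q t * Real.sin (g t) ^ 2) (Icc a b) t) →
      EqOn θ g (Icc a b) := by
    intro a b ha hb hax hxb g hg0 hg x hx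
    have hxI : x ∈ I := hI.out ha hb hx
    obtain ⟨hs0, hs⟩ := hsol x hxI
    -- sol x and g agree on Icc (min x x₀) (max x x₀)
    have hsub : Icc (min x x₀) (max x x₀) ⊆ Icc a b := by
      apply Icc_subset_Icc (le_min hx.1 hax) (max_le hx.2 hxb)
    have hsubI : Icc a b ⊆ I := hI.out ha hb
    obtain ⟨C, hC⟩ := isCompact_Icc.exists_bound_of_continuousOn
      ((hQ.mono hsubI).mono hsub)
    have hQM : ∀ t ∈ Icc (min x x₀) (max x x₀), |Q t| ≤ C := fun t ht =>
      Real.norm_eq_abs (Q t) ▸ hC t ht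
    have hx₀mem : x₀ ∈ Icc (min x x₀) (max x x₀) :=
      ⟨min_le_right _ _, le_max_right _ _⟩
    have := sol_unique hQM hs
      (fun t ht => (hg t (hsub ht)).mono hsub) hx₀mem (by rw [hs0, hg0])
    exact this ⟨min_le_left _ _, le_max_left _ _⟩
  refine ⟨θ, ?_, ?_⟩
  · exact (hsol x₀ hx₀).1
  · intro x₁ hx₁
    obtain ⟨ε, hε, hball⟩ := Metric.mem_nhds_iff.mp (mem_interior_iff_mem_nhds.mp hx₁)
    have hl : x₁ - ε / 2 ∈ I := hball (by
      rw [Metric.mem_ball, Real.dist_eq, show x₁ - ε / 2 - x₁ = -(ε / 2) from by ring,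
        abs_neg, abs_of_nonneg (by linarith)]
      linarith)
    have hr : x₁ + ε / 2 ∈ I := hball (by
      rw [Metric.mem_ball, Real.dist_eq, show x₁ + ε / 2 - x₁ = ε / 2 from by ring,
        abs_of_nonneg (by linarith)]
      linarith)
    set a := min (x₁ - ε / 2) x₀ with hadef
    set b := max (x₁ + ε / 2) x₀ with hbdef
    have ha : a ∈ I := by rcases min_choice (x₁ - ε / 2) x₀ with h | h <;> rw [hadef, h] <;> assumption
    have hb : b ∈ I := by rcases max_choice (x₁ + ε / 2) x₀ with h | h <;> rw [hbdef, h] <;> assumption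
    have hax : a ≤ x₀ := min_le_right _ _
    have hxb : x₀ ≤ b := le_max_right _ _
    have hax₁ : a < x₁ := lt_of_le_of_lt (min_le_left _ _) (by linarith)
    have hx₁b : x₁ < b := lt_of_lt_of_le (by linarith) (le_max_left _ _)
    obtain ⟨g, hg0, hg⟩ := exists_sol_Icc hI hQ ha hb hax hxb y₀
    have heq : EqOn θ g (Icc a b) := key a b ha hb hax hxb g hg0 hg
    have hnhds : Icc a b ∈ nhds x₁ := Icc_mem_nhds hax₁ hx₁b
    have hgat : HasDerivAt g
        (Real.cos (g x₁) ^ 2 + Q x₁ * Real.sin (g x₁) ^ 2) x₁ :=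
      (hg x₁ ⟨hax₁.le, hx₁b.le⟩).hasDerivAt hnhds
    have hev : θ =ᶠ[nhds x₁] g := Filter.eventuallyEq_of_mem hnhds (fun z hz => heq hz)
    have hθx₁ : θ x₁ = g x₁ := heq ⟨hax₁.le, hx₁b.le⟩
    rw [hθx₁]
    exact HasDerivAt.congr_of_eventuallyEq hgat hev

/-- Extend `Q` continuously past endpoints of `I` that belong to `I`, so that
`I` lies in the interior of the enlarged domain. -/
lemma exists_extension {I : Set ℝ} (hI : I.OrdConnected) {Q : ℝ → ℝ}
    (hQ : ContinuousOn Q I) :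
    ∃ I' : Set ℝ, ∃ Q' : ℝ → ℝ, I'.OrdConnected ∧ ContinuousOn Q' I' ∧
      I ⊆ interior I' ∧ EqOn Q Q' I := by
  by_cases hT : ∃ b ∈ I, ∀ y ∈ I, y ≤ b
  · obtain ⟨b, hb, hbmax⟩ := hT
    by_cases hB : ∃ a ∈ I, ∀ y ∈ I, a ≤ y
    · obtain ⟨a, ha, hamin⟩ := hB
      refine ⟨univ, fun x => Q (max a (min x b)), ordConnected_univ, ?_, ?_, ?_⟩
      · apply hQ.comp (Continuous.continuousOn
          (continuous_const.max (continuous_id.min continuous_const)))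
        intro x _
        have hab : a ≤ b := hamin b hb
        apply hI.out ha hb
        exact ⟨le_max_left _ _, max_le hab (min_le_right _ _)⟩
      · simp
      · intro x hx
        simp only
        rw [min_eq_left (hbmax x hx), max_eq_right (hamin x hx)]
    · push_neg at hB
      refine ⟨I ∪ Ici b, fun x => Q (min x b), ?_, ?_, ?_, ?_⟩
      · constructor
        intro u hu v hv z hz
        rcases le_or_gt b z with h | h
        · exact Or.inr h
        · rcases hu with hu | hu
          · exact Or.inl (hI.out hu hb ⟨hz.1, h.le⟩)
          · exact absurd (hu.trans hz.1) (not_le.mpr h)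
      · apply hQ.comp (Continuous.continuousOn
          (continuous_id.min continuous_const))
        intro x hx
        show min x b ∈ I
        rcases hx with hx | hx
        · rw [min_eq_left (hbmax x hx)]; exact hx
        · rw [min_eq_right hx]; exact hb
      · intro x₁ hx₁
        obtain ⟨y, hy, hylt⟩ := hB x₁ hx₁
        apply mem_interior.mpr
        refine ⟨Ioi y, ?_, isOpen_Ioi, hylt⟩
        intro z hz
        rcases le_or_gt z b with h | h
        · exact Or.inl (hI.out hy hb ⟨le_of_lt hz, h⟩)
        · exact Or.inr h.le
      · intro x hx
        simp only
        rw [min_eq_left (hbmax x hx)]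
  · by_cases hB : ∃ a ∈ I, ∀ y ∈ I, a ≤ y
    · obtain ⟨a, ha, hamin⟩ := hB
      push_neg at hT
      refine ⟨I ∪ Iic a, fun x => Q (max x a), ?_, ?_, ?_, ?_⟩
      · constructor
        intro u hu v hv z hz
        rcases lt_or_ge z a with h | h
        · exact Or.inr h.le
        · rcases hv with hv | hv
          · exact Or.inl (hI.out ha hv ⟨h, hz.2⟩)
          · exact Or.inr (hz.2.trans hv)
      · apply hQ.comp (Continuous.continuousOn
          (continuous_id.max continuous_const))
        intro x hx
        show max x a ∈ I
        rcases hx with hx | hx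
        · rw [max_eq_left (hamin x hx)]; exact hx
        · rw [max_eq_right hx]; exact ha
      · intro x₁ hx₁
        obtain ⟨y, hy, hylt⟩ := hT x₁ hx₁
        apply mem_interior.mpr
        refine ⟨Iio y, ?_, isOpen_Iio, hylt⟩
        intro z hz
        rcases le_or_gt a z with h | h
        · exact Or.inl (hI.out ha hy ⟨h, le_of_lt hz⟩)
        · exact Or.inr h.le
      · intro x hx
        simp only
        rw [max_eq_left (hamin x hx)]
    · push_neg at hT hB
      refine ⟨I, Q, hI, hQ, ?_, fun _ _ => rfl⟩
      intro x₁ hx₁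
      obtain ⟨y, hy, hylt⟩ := hT x₁ hx₁
      obtain ⟨y', hy', hylt'⟩ := hB x₁ hx₁
      apply mem_interior.mpr
      exact ⟨Ioo y' y, fun z hz => hI.out hy' hy ⟨hz.1.le, hz.2.le⟩,
        isOpen_Ioo, hylt', hylt⟩

end PruferAux

/-- Analytical core of Theorem 4.1: if a diffeomorphic transform of every
solution of the Prüfer equation solves a fixed linear first-order equation,
then `Q` is constant. -/
theorem prufer_linearizable_implies_Q_constant
    (I : Set ℝ) (hI : I.OrdConnected)
    (Q : ℝ → ℝ) (hQ : ContinuousOn Q I)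
    (φ : ℝ → ℝ) (hφ : ContDiff ℝ 2 φ) (hφ' : ∀ y, deriv φ y ≠ 0)
    (p q : ℝ → ℝ) (hp : ContinuousOn p I) (hq : ContinuousOn q I)
    (hlin : ∀ θ : ℝ → ℝ,
      (∀ x ∈ I, HasDerivAt θ
        (Real.cos (θ x) ^ 2 + Q x * Real.sin (θ x) ^ 2) x) →
      ∀ x ∈ I, HasDerivAt (φ ∘ θ) (q x - p x * φ (θ x)) x) :
    ∀ x ∈ I, ∀ x' ∈ I, Q x = Q x' := by
  obtain ⟨I', Q', hI', hQ', hsub, heqn⟩ := PruferAux.exists_extension hI hQ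
  have hφdiff : Differentiable ℝ φ := hφ.differentiable (by norm_num)
  -- The fundamental pointwise identity.
  have key : ∀ x₀ ∈ I, ∀ y₀ : ℝ,
      deriv φ y₀ * (Real.cos y₀ ^ 2 + Q x₀ * Real.sin y₀ ^ 2)
        = q x₀ - p x₀ * φ y₀ := by
    intro x₀ hx₀ y₀
    obtain ⟨θ, hθ₀, hθ⟩ := PruferAux.exists_global hI'
      hQ' (interior_subset (hsub hx₀)) y₀
    have hode : ∀ x ∈ I, HasDerivAt θ
        (Real.cos (θ x) ^ 2 + Q x * Real.sin (θ x) ^ 2) x := by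
      intro x hx
      have := hθ x (hsub hx)
      rwa [← heqn hx] at this
    have h1 := hlin θ hode x₀ hx₀
    have h2 : HasDerivAt (φ ∘ θ)
        (deriv φ (θ x₀) * (Real.cos (θ x₀) ^ 2 + Q x₀ * Real.sin (θ x₀) ^ 2)) x₀ :=
      HasDerivAt.comp x₀ ((hφdiff (θ x₀)).hasDerivAt) (hode x₀ hx₀)
    have := h2.unique h1
    rwa [hθ₀] at this
  -- φ is injective since its derivative never vanishes.
  have hderiv_cont : Continuous (deriv φ) := hφ.continuous_deriv (by norm_num)
  have hsign : (∀ y, 0 < deriv φ y) ∨ (∀ y, deriv φ y < 0) := by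
    by_contra h
    push_neg at h
    obtain ⟨⟨y₁, hy₁⟩, ⟨y₂, hy₂⟩⟩ := h
    have hy₁' : deriv φ y₁ < 0 := lt_of_le_of_ne hy₁ (hφ' y₁)
    have hy₂' : 0 < deriv φ y₂ := lt_of_le_of_ne hy₂ (Ne.symm (hφ' y₂))
    have : (0 : ℝ) ∈ Set.uIcc (deriv φ y₁) (deriv φ y₂) :=
      Set.mem_uIcc.mpr (Or.inl ⟨hy₁'.le, hy₂'.le⟩)
    obtain ⟨c, _, hc⟩ := intermediate_value_uIcc (hderiv_cont.continuousOn) this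
    exact hφ' c hc
  have hinj : Function.Injective φ := by
    rcases hsign with h | h
    · exact (strictMono_of_deriv_pos h).injective
    · exact (strictAnti_of_deriv_neg h).injective
  have hne : φ 0 - φ π ≠ 0 :=
    sub_ne_zero.mpr (fun hc => Real.pi_ne_zero (hinj hc).symm)
  intro x hx x' hx'
  have e1 := key x hx 0
  have e2 := key x hx π
  have e3 := key x hx (π / 2)
  have e1' := key x' hx' 0
  have e2' := key x' hx' π
  have e3' := key x' hx' (π / 2)
  simp only [Real.cos_zero, Real.sin_zero, Real.cos_pi, Real.sin_pi,
    Real.cos_pi_div_two, Real.sin_pi_div_two] at e1 e2 e3 e1' e2' e3'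
  norm_num at e1 e2 e3 e1' e2' e3'
  have hpp : p x = p x' := by
    have h0 : (p x - p x') * (φ 0 - φ π) = 0 := by linarith
    rcases mul_eq_zero.mp h0 with h | h
    · linarith [sub_eq_zero.mp h]
    · exact absurd h hne
  have hqq : q x = q x' := by rw [hpp] at e1; linarith
  have hfin : deriv φ (π / 2) * Q x = deriv φ (π / 2) * Q x' := by
    rw [hpp, hqq] at e3; linarith
  exact mul_left_cancel₀ (hφ' (π / 2)) hfin
end
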